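/- Let q be a positive integer and χ a non-principal Dirichlet character modulo q. Suppose that for every ε > 0 there exists a constant K_ε > 0 such that |∑_{n=1}^{N} χ(p_n)| ≤ K_ε · N^{1/2+ε} for all N ≥ 1, where p_n denotes the n-th prime. Then L(s,χ) ≠ 0 for every s ∈ ℂ with Re(s) > 1/2. -/

import Mathlib

open Finset

namespace PrimeCharSumAux

open Complex Filter Topology Set

noncomputable section

abbrev P (n : ℕ) : ℕ := Nat.nth Nat.Prime n

lemma P_prime (n : ℕ) : (P n).Prime := Nat.prime_nth_prime n

lemma two_le_P (n : ℕ) : 2 ≤ P n := (P_prime n).two_le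

lemma P_strictMono : StrictMono P := Nat.nth_strictMono Nat.infinite_setOf_prime

lemma add_two_le_P (n : ℕ) : n + 2 ≤ P n := by
  induction n with
  | zero => simpa using two_le_P 0
  | succ n ih =>
      have h2 := P_strictMono (Nat.lt_succ_self n)
      rw [Nat.succ_eq_add_one] at h2
      omega

lemma cpow_sub_bound {s : ℂ} (hs : 0 < s.re) {m : ℕ} (hm : 1 ≤ m) :
    ‖((m + 1 : ℕ) : ℂ) ^ (-s) - ((m : ℕ) : ℂ) ^ (-s)‖ ≤ ‖s‖ * (m : ℝ) ^ (-s.re - 1) := by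
  have hs0 : s ≠ 0 := fun h => by simp [h] at hs
  have hmr : (1 : ℝ) ≤ (m : ℝ) := by exact_mod_cast hm
  set f : ℝ → ℂ := fun t => (t : ℂ) ^ (-s) with hf
  have hder : ∀ t ∈ Set.Icc (m : ℝ) ((m : ℝ) + 1),
      HasDerivWithinAt f (-s * (t : ℂ) ^ (-s - 1)) (Set.Icc (m : ℝ) ((m : ℝ) + 1)) t := by
    intro t ht
    have ht0 : (0 : ℝ) < t := lt_of_lt_of_le (by linarith) ht.1
    have h1 : HasDerivAt (fun y : ℝ => (y : ℂ) ^ ((-s - 1) + 1) / ((-s - 1) + 1))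
        ((t : ℂ) ^ (-s - 1)) t :=
      hasDerivAt_ofReal_cpow_const' ht0.ne' (fun h => hs0 (by linear_combination -h))
    have h2 : HasDerivAt (fun y : ℝ => -s * ((y : ℂ) ^ ((-s - 1) + 1) / ((-s - 1) + 1)))
        (-s * (t : ℂ) ^ (-s - 1)) t := h1.const_mul (-s)
    have h3 : (fun y : ℝ => -s * ((y : ℂ) ^ ((-s - 1) + 1) / ((-s - 1) + 1))) = f := by
      funext y
      have : (-s - 1) + 1 = -s := by ring
      rw [this, hf]
      field_simp
    rw [h3] at h2
    exact h2.hasDerivWithinAt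
  have hbound : ∀ t ∈ Set.Icc (m : ℝ) ((m : ℝ) + 1),
      ‖-s * (t : ℂ) ^ (-s - 1)‖ ≤ ‖s‖ * (m : ℝ) ^ (-s.re - 1) := by
    intro t ht
    have ht0 : (0 : ℝ) < t := lt_of_lt_of_le (by linarith) ht.1
    rw [norm_mul, norm_neg]
    have : ‖(t : ℂ) ^ (-s - 1)‖ = t ^ ((-s - 1).re) := by
      rw [Complex.norm_cpow_eq_rpow_re_of_pos ht0]
    rw [this]
    gcongr
    have : (-s - 1).re = -s.re - 1 := by simp
    rw [this]
    apply Real.rpow_le_rpow_of_nonpos (by positivity) ht.1 (by linarith)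
  have key := Convex.norm_image_sub_le_of_norm_hasDerivWithin_le hder hbound
    (convex_Icc _ _) (Set.left_mem_Icc.mpr (by linarith)) (Set.right_mem_Icc.mpr (by linarith))
  have : ‖f ((m : ℝ) + 1) - f (m : ℝ)‖ ≤ ‖s‖ * (m : ℝ) ^ (-s.re - 1) * ‖(m : ℝ) + 1 - m‖ := key
  simpa [hf, Nat.cast_add, Nat.cast_one] using this

lemma telescope (s : ℂ) (i : ℕ) :
    ((P (i+1) : ℕ) : ℂ) ^ (-s) - ((P i : ℕ) : ℂ) ^ (-s)
      = ∑ m ∈ Ico (P i) (P (i+1)), (((m + 1 : ℕ) : ℂ) ^ (-s) - ((m : ℕ) : ℂ) ^ (-s)) := by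
  rw [Finset.sum_Ico_eq_sub _ (le_of_lt (P_strictMono (Nat.lt_succ_self i))),
    Finset.sum_range_sub (fun m => ((m : ℕ) : ℂ) ^ (-s)),
    Finset.sum_range_sub (fun m => ((m : ℕ) : ℂ) ^ (-s))]
  ring


variable {q : ℕ} [NeZero q] (χ : DirichletCharacter ℂ q)

def S (n : ℕ) : ℂ := ∑ k ∈ Finset.range n, χ (P k)

def hterm (i : ℕ) (s : ℂ) : ℂ :=
  (((P (i+1) : ℕ) : ℂ) ^ (-s) - ((P i : ℕ) : ℂ) ^ (-s)) * S χ (i+1)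

lemma hterm_bound {ε K σ₀ R : ℝ} (hε : 0 < ε) (hσ₀ : 0 < σ₀)
    (hK : ∀ N : ℕ, 1 ≤ N → ‖S χ N‖ ≤ K * (N : ℝ) ^ ((1 : ℝ) / 2 + ε))
    {s : ℂ} (hs : σ₀ ≤ s.re) (hR : ‖s‖ ≤ R) (i : ℕ) :
    ‖hterm χ i s‖ ≤ K * R * ∑ m ∈ Ico (P i) (P (i+1)), (m : ℝ) ^ ((1 : ℝ)/2 + ε - σ₀ - 1) := by
  have hsre : 0 < s.re := lt_of_lt_of_le hσ₀ hs
  have hR0 : 0 ≤ R := le_trans (norm_nonneg s) hR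
  have hK0 : 0 ≤ K := by
    simpa using (norm_nonneg (S χ 1)).trans (hK 1 le_rfl)
  rw [hterm, norm_mul, telescope]
  calc ‖∑ m ∈ Ico (P i) (P (i+1)), (((m + 1 : ℕ) : ℂ) ^ (-s) - ((m : ℕ) : ℂ) ^ (-s))‖ * ‖S χ (i+1)‖
      ≤ (∑ m ∈ Ico (P i) (P (i+1)), ‖s‖ * (m : ℝ) ^ (-s.re - 1)) * (K * ((i+1 : ℕ) : ℝ) ^ ((1:ℝ)/2 + ε)) := by
        apply mul_le_mul _ (hK (i+1) (by omega)) (norm_nonneg _)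
          (by positivity)
        refine le_trans (norm_sum_le _ _) (Finset.sum_le_sum fun m hm => ?_)
        exact cpow_sub_bound hsre (by have := (Finset.mem_Ico.mp hm).1; have := two_le_P i; omega)
    _ ≤ ∑ m ∈ Ico (P i) (P (i+1)), K * R * (m : ℝ) ^ ((1 : ℝ)/2 + ε - σ₀ - 1) := by
        rw [Finset.sum_mul]
        refine Finset.sum_le_sum fun m hm => ?_
        have hmP : P i ≤ m := (Finset.mem_Ico.mp hm).1
        have hm2 : 2 ≤ m := le_trans (two_le_P i) hmP
        have hm1 : (1:ℝ) ≤ (m:ℝ) := by exact_mod_cast (by omega : 1 ≤ m)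
        have hm0 : (0:ℝ) < (m:ℝ) := by positivity
        have e1 : (m : ℝ) ^ (-s.re - 1) ≤ (m : ℝ) ^ (-σ₀ - 1) :=
          Real.rpow_le_rpow_of_exponent_le hm1 (by linarith)
        have e2 : ((i+1 : ℕ) : ℝ) ^ ((1:ℝ)/2 + ε) ≤ (m : ℝ) ^ ((1:ℝ)/2 + ε) := by
          apply Real.rpow_le_rpow (by positivity) _ (by linarith)
          have := add_two_le_P i
          exact_mod_cast (by omega : i + 1 ≤ m)
        calc ‖s‖ * (m : ℝ) ^ (-s.re - 1) * (K * ((i+1 : ℕ) : ℝ) ^ ((1:ℝ)/2 + ε))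
            ≤ R * (m : ℝ) ^ (-σ₀ - 1) * (K * (m : ℝ) ^ ((1:ℝ)/2 + ε)) := by
              apply mul_le_mul (mul_le_mul hR e1 (by positivity) hR0)
                (mul_le_mul_of_nonneg_left e2 hK0) (by positivity) (by positivity)
          _ = K * R * ((m : ℝ) ^ (-σ₀ - 1) * (m : ℝ) ^ ((1:ℝ)/2 + ε)) := by ring
          _ = K * R * (m : ℝ) ^ ((1 : ℝ)/2 + ε - σ₀ - 1) := by
              rw [← Real.rpow_add hm0]
              congr 1
              ring
    _ = K * R * ∑ m ∈ Ico (P i) (P (i+1)), (m : ℝ) ^ ((1 : ℝ)/2 + ε - σ₀ - 1) := by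
        rw [Finset.mul_sum]

lemma summable_majorant {c : ℝ} (hc : c < -1) (a : ℝ) :
    Summable (fun i : ℕ => a * ∑ m ∈ Ico (P i) (P (i+1)), (m : ℝ) ^ c) := by
  apply Summable.mul_left
  have hv : Summable (fun m : ℕ => (m : ℝ) ^ c) := Real.summable_nat_rpow.mpr hc
  have hvn : ∀ m : ℕ, 0 ≤ (m : ℝ) ^ c := fun m => Real.rpow_nonneg (Nat.cast_nonneg m) c
  apply summable_of_sum_range_le (c := ∑' m : ℕ, (m : ℝ) ^ c)
  · intro i
    exact Finset.sum_nonneg fun m _ => hvn m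
  · intro I
    have key : ∀ i : ℕ, ∑ m ∈ Ico (P i) (P (i+1)), (m : ℝ) ^ c
        = (∑ m ∈ Finset.range (P (i+1)), (m : ℝ) ^ c) - ∑ m ∈ Finset.range (P i), (m : ℝ) ^ c :=
      fun i => Finset.sum_Ico_eq_sub _ (le_of_lt (P_strictMono (Nat.lt_succ_self i)))
    calc ∑ i ∈ Finset.range I, ∑ m ∈ Ico (P i) (P (i+1)), (m : ℝ) ^ c
        = (∑ m ∈ Finset.range (P I), (m : ℝ) ^ c) - ∑ m ∈ Finset.range (P 0), (m : ℝ) ^ c := by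
          simp_rw [key]
          exact Finset.sum_range_sub (fun j => ∑ m ∈ Finset.range (P j), (m : ℝ) ^ c) I
      _ ≤ ∑ m ∈ Finset.range (P I), (m : ℝ) ^ c := by
          have : 0 ≤ ∑ m ∈ Finset.range (P 0), (m : ℝ) ^ c :=
            Finset.sum_nonneg fun m _ => hvn m
          linarith
      _ ≤ ∑' m : ℕ, (m : ℝ) ^ c := Summable.sum_le_tsum _ (fun m _ => hvn m) hv

def F (s : ℂ) : ℂ := -∑' i, hterm χ i s

lemma byparts (s : ℂ) (N : ℕ) :
    ∑ n ∈ Finset.range N, χ (P n) * ((P n : ℕ) : ℂ) ^ (-s)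
      = ((P (N-1) : ℕ) : ℂ) ^ (-s) * S χ N - ∑ i ∈ Finset.range (N-1), hterm χ i s := by
  have h := Finset.sum_range_by_parts (fun n => ((P n : ℕ) : ℂ) ^ (-s)) (fun n => χ (P n)) N
  simp only [smul_eq_mul] at h
  rw [show (∑ n ∈ Finset.range N, χ (P n) * ((P n : ℕ) : ℂ) ^ (-s))
      = ∑ n ∈ Finset.range N, ((P n : ℕ) : ℂ) ^ (-s) * χ (P n) by
    exact Finset.sum_congr rfl fun n _ => mul_comm _ _]
  rw [h]
  rfl

lemma summable_hterm {ε K : ℝ} (hε : 0 < ε)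
    (hK : ∀ N : ℕ, 1 ≤ N → ‖S χ N‖ ≤ K * (N : ℝ) ^ ((1 : ℝ) / 2 + ε))
    {s : ℂ} (hs : 1/2 + ε < s.re) :
    Summable (fun i => hterm χ i s) := by
  apply Summable.of_norm_bounded
    (summable_majorant (c := (1 : ℝ)/2 + ε - s.re - 1) (by linarith) (K * ‖s‖))
  intro i
  exact hterm_bound χ hε (by linarith) hK le_rfl le_rfl i

lemma tendsto_partial {ε K : ℝ} (hε : 0 < ε)
    (hK : ∀ N : ℕ, 1 ≤ N → ‖S χ N‖ ≤ K * (N : ℝ) ^ ((1 : ℝ) / 2 + ε))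
    {s : ℂ} (hs : 1/2 + ε < s.re) :
    Tendsto (fun N => ∑ n ∈ Finset.range N, χ (P n) * ((P n : ℕ) : ℂ) ^ (-s)) atTop
      (𝓝 (F χ s)) := by
  have hK0 : 0 ≤ K := by
    simpa using (norm_nonneg (S χ 1)).trans (hK 1 le_rfl)
  have h2 : Tendsto (fun N : ℕ => ∑ i ∈ Finset.range (N-1), hterm χ i s) atTop
      (𝓝 (∑' i, hterm χ i s)) :=
    ((summable_hterm χ hε hK hs).hasSum.tendsto_sum_nat).comp (tendsto_sub_atTop_nat 1)
  have h1 : Tendsto (fun N : ℕ => ((P (N-1) : ℕ) : ℂ) ^ (-s) * S χ N) atTop (𝓝 0) := by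
    have hc : (0:ℝ) < s.re - 1/2 - ε := by linarith
    apply squeeze_zero_norm' (a := fun N : ℕ => K * (N : ℝ) ^ (-(s.re - 1/2 - ε)))
    · filter_upwards [eventually_ge_atTop 1] with N hN
      have hPN : N ≤ P (N-1) := by have := add_two_le_P (N-1); omega
      have hN0 : (0:ℝ) < (N:ℝ) := by exact_mod_cast hN
      have hsre : (0:ℝ) < s.re := by linarith
      rw [norm_mul, Complex.norm_natCast_cpow_of_pos (by have := two_le_P (N-1); omega)]
      have e1 : ((P (N-1) : ℕ) : ℝ) ^ ((-s).re) ≤ (N : ℝ) ^ (-s.re) := by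
        rw [Complex.neg_re]
        apply Real.rpow_le_rpow_of_nonpos hN0 (by exact_mod_cast hPN) (by linarith)
      calc ((P (N-1) : ℕ) : ℝ) ^ ((-s).re) * ‖S χ N‖
          ≤ (N : ℝ) ^ (-s.re) * (K * (N : ℝ) ^ ((1:ℝ)/2 + ε)) := by
            apply mul_le_mul e1 (hK N hN) (norm_nonneg _) (by positivity)
        _ = K * ((N : ℝ) ^ (-s.re) * (N : ℝ) ^ ((1:ℝ)/2 + ε)) := by ring
        _ = K * (N : ℝ) ^ (-(s.re - 1/2 - ε)) := by
            rw [← Real.rpow_add hN0]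
            congr 1
            ring
    · have : Tendsto (fun x : ℝ => x ^ (-(s.re - 1/2 - ε))) atTop (𝓝 0) :=
        tendsto_rpow_neg_atTop hc
      have := (this.comp tendsto_natCast_atTop_atTop).const_mul K
      simpa using this
  have := h1.sub h2
  rw [zero_sub] at this
  apply Tendsto.congr' (Eventually.of_forall fun N => (byparts χ s N).symm)
  exact this

lemma F_differentiableAt
    (hbound : ∀ ε : ℝ, 0 < ε → ∃ K : ℝ, 0 < K ∧ ∀ N : ℕ, 1 ≤ N →
      ‖S χ N‖ ≤ K * (N : ℝ) ^ ((1 : ℝ) / 2 + ε))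
    {s₀ : ℂ} (hs₀ : 1/2 < s₀.re) : DifferentiableAt ℂ (F χ) s₀ := by
  set ε := (s₀.re - 1/2)/4 with hε_def
  have hε : 0 < ε := by simp only [hε_def]; linarith
  obtain ⟨K, hK0, hK⟩ := hbound ε hε
  set σ₀ := 1/2 + 2*ε with hσ₀_def
  set R := ‖s₀‖ + 1 with hR_def
  set Uo : Set ℂ := {s : ℂ | σ₀ < s.re ∧ ‖s‖ < R} with hUo_def
  have hUopen : IsOpen Uo := by
    apply IsOpen.and
    · exact isOpen_lt continuous_const continuous_re
    · exact isOpen_lt continuous_norm continuous_const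
  have hmem : s₀ ∈ Uo := by
    constructor
    · simp only [hσ₀_def, hε_def]; linarith
    · simp only [hR_def]; linarith
  have hdiff : DifferentiableOn ℂ (fun s => ∑' i, hterm χ i s) Uo := by
    apply differentiableOn_tsum_of_summable_norm
      (u := fun i => K * R * ∑ m ∈ Ico (P i) (P (i+1)), (m : ℝ) ^ ((1 : ℝ)/2 + ε - σ₀ - 1))
    · exact summable_majorant (by simp only [hσ₀_def]; linarith) _
    · intro i
      apply DifferentiableOn.mul_const
      apply DifferentiableOn.sub <;>
      · apply Differentiable.differentiableOn
        apply Differentiable.const_cpow (differentiable_neg)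
        exact Or.inl (by exact_mod_cast (two_le_P _).trans_lt' (by norm_num) |>.ne')
    · exact hUopen
    · intro i w hw
      exact hterm_bound χ hε (by simp only [hσ₀_def]; linarith) hK hw.1.le hw.2.le i
  have := (hdiff.neg.differentiableAt (hUopen.mem_nhds hmem))
  exact this

def primeEquiv : ℕ ≃ Nat.Primes :=
  Equiv.ofBijective (fun n => ⟨P n, P_prime n⟩)
    ⟨fun a b hab => Nat.nth_injective Nat.infinite_setOf_prime (congrArg Subtype.val hab),
     fun pp => ⟨Nat.count Nat.Prime pp, Subtype.ext (Nat.nth_count pp.prop)⟩⟩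

lemma summable_w {s : ℂ} (hs : 1 < s.re) :
    Summable (fun pp : Nat.Primes => χ (pp : ℕ) * ((pp : ℕ) : ℂ) ^ (-s)) := by
  apply Summable.of_norm_bounded (Nat.Primes.summable_rpow.mpr (by linarith : -s.re < -1))
  intro pp
  rw [norm_mul, Complex.norm_natCast_cpow_of_pos pp.prop.pos]
  calc ‖χ (pp : ℕ)‖ * ((pp : ℕ) : ℝ) ^ ((-s).re)
      ≤ 1 * ((pp : ℕ) : ℝ) ^ ((-s).re) := by
        apply mul_le_mul_of_nonneg_right (DirichletCharacter.norm_le_one χ _)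
          (Real.rpow_nonneg (Nat.cast_nonneg _) _)
    _ = ((pp : ℕ) : ℝ) ^ (-s.re) := by rw [one_mul, Complex.neg_re]

lemma tsum_primes_eq_F {ε K : ℝ} (hε : 0 < ε)
    (hK : ∀ N : ℕ, 1 ≤ N → ‖S χ N‖ ≤ K * (N : ℝ) ^ ((1 : ℝ) / 2 + ε))
    (hε1 : ε < 1/2) {s : ℂ} (hs : 1 < s.re) :
    ∑' pp : Nat.Primes, χ (pp : ℕ) * ((pp : ℕ) : ℂ) ^ (-s) = F χ s := by
  have hw := summable_w χ hs
  have h1 : Tendsto (fun N => ∑ n ∈ Finset.range N,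
      χ (P n) * ((P n : ℕ) : ℂ) ^ (-s)) atTop
      (𝓝 (∑' pp : Nat.Primes, χ (pp : ℕ) * ((pp : ℕ) : ℂ) ^ (-s))) := by
    have := ((Equiv.hasSum_iff primeEquiv).mpr hw.hasSum).tendsto_sum_nat
    exact this
  exact tendsto_nhds_unique h1 (tendsto_partial χ hε hK (by linarith))

def wterm (pp : Nat.Primes) (s : ℂ) : ℂ := χ (pp : ℕ) * ((pp : ℕ) : ℂ) ^ (-s)

def gterm (pp : Nat.Primes) (s : ℂ) : ℂ := -Complex.log (1 - wterm χ pp s) - wterm χ pp s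

def Rfun (s : ℂ) : ℂ := ∑' pp : Nat.Primes, gterm χ pp s

lemma norm_wterm_le (pp : Nat.Primes) (s : ℂ) : ‖wterm χ pp s‖ ≤ ((pp : ℕ) : ℝ) ^ (-s.re) := by
  rw [wterm, norm_mul, Complex.norm_natCast_cpow_of_pos pp.prop.pos]
  calc ‖χ (pp : ℕ)‖ * ((pp : ℕ) : ℝ) ^ ((-s).re)
      ≤ 1 * ((pp : ℕ) : ℝ) ^ ((-s).re) :=
        mul_le_mul_of_nonneg_right (DirichletCharacter.norm_le_one χ _)
          (Real.rpow_nonneg (Nat.cast_nonneg _) _)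
    _ = ((pp : ℕ) : ℝ) ^ (-s.re) := by rw [one_mul, Complex.neg_re]

lemma norm_wterm_le' {σ₀ : ℝ} (hσ₀ : 0 < σ₀) (pp : Nat.Primes) {s : ℂ} (hs : σ₀ ≤ s.re) :
    ‖wterm χ pp s‖ ≤ (2 : ℝ) ^ (-σ₀) := by
  refine (norm_wterm_le χ pp s).trans ?_
  have h2 : (2 : ℝ) ≤ ((pp : ℕ) : ℝ) := by exact_mod_cast pp.prop.two_le
  calc ((pp : ℕ) : ℝ) ^ (-s.re) ≤ ((pp : ℕ) : ℝ) ^ (-σ₀) :=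
        Real.rpow_le_rpow_of_exponent_le (by linarith) (by linarith)
    _ ≤ (2 : ℝ) ^ (-σ₀) :=
        Real.rpow_le_rpow_of_nonpos (by norm_num) h2 (by linarith)

lemma two_rpow_lt_one {σ₀ : ℝ} (hσ₀ : 0 < σ₀) : (2 : ℝ) ^ (-σ₀) < 1 := by
  have := Real.rpow_lt_one_of_one_lt_of_neg (x := 2) (by norm_num) (by linarith : -σ₀ < 0)
  exact this

lemma gterm_bound {σ₀ : ℝ} (hσ₀ : 0 < σ₀) (pp : Nat.Primes) {s : ℂ} (hs : σ₀ ≤ s.re) :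
    ‖gterm χ pp s‖ ≤ ((1 : ℝ) - (2:ℝ) ^ (-σ₀))⁻¹ / 2 * ((pp : ℕ) : ℝ) ^ (-(2*σ₀)) := by
  set w := wterm χ pp s with hw
  have hwn : ‖w‖ ≤ ((pp : ℕ) : ℝ) ^ (-σ₀) := by
    refine (norm_wterm_le χ pp s).trans ?_
    have h2 : (1 : ℝ) ≤ ((pp : ℕ) : ℝ) := by exact_mod_cast pp.prop.one_lt.le
    exact Real.rpow_le_rpow_of_exponent_le h2 (by linarith)
  have hw2 : ‖w‖ ≤ (2:ℝ)^(-σ₀) := norm_wterm_le' χ hσ₀ pp hs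
  have hw1 : ‖w‖ < 1 := lt_of_le_of_lt hw2 (two_rpow_lt_one hσ₀)
  have key : gterm χ pp s = -(Complex.log (1 + (-w)) - (-w)) := by
    rw [gterm, ← hw]
    rw [show (1 : ℂ) + -w = 1 - w by ring]
    ring
  rw [key, norm_neg]
  have hz : ‖-w‖ < 1 := by rwa [norm_neg]
  refine (Complex.norm_log_one_add_sub_self_le hz).trans ?_
  rw [norm_neg]
  have e1 : ‖w‖ ^ 2 ≤ (((pp : ℕ) : ℝ) ^ (-σ₀)) ^ 2 := by
    apply pow_le_pow_left₀ (norm_nonneg w) hwn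
  have e2 : ((1:ℝ) - ‖w‖)⁻¹ ≤ ((1:ℝ) - (2:ℝ)^(-σ₀))⁻¹ := by
    apply inv_anti₀
    · linarith [two_rpow_lt_one hσ₀]
    · linarith
  have e3 : (((pp : ℕ) : ℝ) ^ (-σ₀)) ^ 2 = ((pp : ℕ) : ℝ) ^ (-(2*σ₀)) := by
    rw [← Real.rpow_natCast (((pp : ℕ) : ℝ) ^ (-σ₀)) 2, ← Real.rpow_mul (Nat.cast_nonneg _)]
    norm_num
    congr 1
    ring
  calc ‖w‖ ^ 2 * (1 - ‖w‖)⁻¹ / 2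
      ≤ (((pp : ℕ) : ℝ) ^ (-σ₀)) ^ 2 * ((1:ℝ) - (2:ℝ)^(-σ₀))⁻¹ / 2 := by
        apply div_le_div_of_nonneg_right _ (by norm_num)
        · exact mul_le_mul e1 e2 (inv_nonneg.mpr (by linarith)) (by positivity)
      _ = ((1 : ℝ) - (2:ℝ) ^ (-σ₀))⁻¹ / 2 * ((pp : ℕ) : ℝ) ^ (-(2*σ₀)) := by
        rw [e3]; ring

lemma summable_gterm {s : ℂ} (hs : 1/2 < s.re) : Summable (fun pp => gterm χ pp s) := by
  apply Summable.of_norm_bounded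
    (g := fun pp : Nat.Primes => ((1 : ℝ) - (2:ℝ) ^ (-s.re))⁻¹ / 2 * ((pp : ℕ) : ℝ) ^ (-(2*s.re)))
  · exact (Nat.Primes.summable_rpow.mpr (by linarith)).mul_left _
  · intro pp
    exact gterm_bound χ (by linarith) pp le_rfl

lemma gterm_differentiableOn {σ₀ : ℝ} (hσ₀ : 0 < σ₀) (pp : Nat.Primes) :
    DifferentiableOn ℂ (gterm χ pp) {s : ℂ | σ₀ < s.re} := by
  have hp0 : ((pp : ℕ) : ℂ) ≠ 0 := by
    exact_mod_cast pp.prop.pos.ne'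
  have hwdiff : Differentiable ℂ (wterm χ pp) := by
    apply Differentiable.const_mul
    exact Differentiable.const_cpow differentiable_neg (Or.inl hp0)
  intro s hs
  apply DifferentiableWithinAt.sub _ (hwdiff s).differentiableWithinAt
  apply DifferentiableWithinAt.neg
  apply DifferentiableAt.differentiableWithinAt
  apply DifferentiableAt.clog ((differentiable_const (1:ℂ)).sub hwdiff).differentiableAt
  left
  have h1 : ‖wterm χ pp s‖ < 1 :=
    lt_of_le_of_lt (norm_wterm_le' χ hσ₀ pp (le_of_lt hs)) (two_rpow_lt_one hσ₀)
  have h2 : (wterm χ pp s).re ≤ ‖wterm χ pp s‖ := Complex.re_le_norm _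
  change 0 < (1 - wterm χ pp s).re
  simp only [Complex.sub_re, Complex.one_re]
  linarith

lemma Rfun_differentiableAt {s₀ : ℂ} (hs₀ : 1/2 < s₀.re) :
    DifferentiableAt ℂ (Rfun χ) s₀ := by
  set σ₀ := (1/2 + s₀.re)/2 with hσ₀_def
  have hσ₀ : 1/2 < σ₀ := by simp only [hσ₀_def]; linarith
  have hσ₀0 : 0 < σ₀ := by linarith
  have hUopen : IsOpen {s : ℂ | σ₀ < s.re} := isOpen_lt continuous_const continuous_re
  have hdiff : DifferentiableOn ℂ (Rfun χ) {s : ℂ | σ₀ < s.re} := by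
    apply differentiableOn_tsum_of_summable_norm
      (u := fun pp : Nat.Primes => ((1 : ℝ) - (2:ℝ) ^ (-σ₀))⁻¹ / 2 * ((pp : ℕ) : ℝ) ^ (-(2*σ₀)))
    · exact (Nat.Primes.summable_rpow.mpr (by linarith)).mul_left _
    · exact fun pp => gterm_differentiableOn χ hσ₀0 pp
    · exact hUopen
    · exact fun pp w hw => gterm_bound χ hσ₀0 pp (le_of_lt hw)
  exact hdiff.differentiableAt (hUopen.mem_nhds (by simp only [Set.mem_setOf_eq, hσ₀_def]; linarith))

lemma exp_H_eq {ε K : ℝ} (hε : 0 < ε)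
    (hK : ∀ N : ℕ, 1 ≤ N → ‖S χ N‖ ≤ K * (N : ℝ) ^ ((1 : ℝ) / 2 + ε))
    (hε1 : ε < 1/2) {s : ℂ} (hs : 1 < s.re) :
    Complex.exp (F χ s + Rfun χ s) = DirichletCharacter.LFunction χ s := by
  have hw := summable_w χ hs
  have hg := summable_gterm χ (by linarith : 1/2 < s.re)
  have hsum : F χ s + Rfun χ s = ∑' pp : Nat.Primes, -Complex.log (1 - wterm χ pp s) := by
    rw [← tsum_primes_eq_F χ hε hK hε1 hs, Rfun, ← Summable.tsum_add hw hg]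
    congr 1
    funext pp
    rw [gterm, wterm]
    ring
  rw [hsum, DirichletCharacter.LFunction_eq_LSeries χ hs]
  exact DirichletCharacter.LSeries_eulerProduct_exp_log χ hs

theorem main_aux {q : ℕ} [NeZero q] (χ : DirichletCharacter ℂ q) (hχ : χ ≠ 1)
    (hbound : ∀ ε : ℝ, 0 < ε → ∃ K : ℝ, 0 < K ∧ ∀ N : ℕ, 1 ≤ N →
      ‖∑ n ∈ Finset.range N, χ (Nat.nth Nat.Prime n)‖ ≤ K * (N : ℝ) ^ ((1 : ℝ) / 2 + ε)) :
    ∀ s : ℂ, 1 / 2 < s.re → DirichletCharacter.LFunction χ s ≠ 0 := by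
  intro s hs
  have hbound' : ∀ ε : ℝ, 0 < ε → ∃ K : ℝ, 0 < K ∧ ∀ N : ℕ, 1 ≤ N →
      ‖S χ N‖ ≤ K * (N : ℝ) ^ ((1 : ℝ) / 2 + ε) := hbound
  obtain ⟨K, hK0, hK⟩ := hbound' (1/4) (by norm_num)
  set U : Set ℂ := {z : ℂ | 1/2 < z.re} with hU_def
  have hUopen : IsOpen U := isOpen_lt continuous_const continuous_re
  have hUpre : IsPreconnected U := (convex_halfSpace_re_gt (1/2)).isPreconnected
  have hA1 : AnalyticOnNhd ℂ (DirichletCharacter.LFunction χ) U :=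
    ((DirichletCharacter.differentiable_LFunction hχ).differentiableOn).analyticOnNhd hUopen
  have hA2 : AnalyticOnNhd ℂ (fun z => Complex.exp (F χ z + Rfun χ z)) U := by
    apply DifferentiableOn.analyticOnNhd _ hUopen
    intro z hz
    exact (((F_differentiableAt χ hbound' hz).add (Rfun_differentiableAt χ hz)).cexp).differentiableWithinAt
  have h2U : (2 : ℂ) ∈ U := by
    simp only [hU_def, Set.mem_setOf_eq]
    norm_num
  have hev : (DirichletCharacter.LFunction χ) =ᶠ[𝓝 (2 : ℂ)]
      (fun z => Complex.exp (F χ z + Rfun χ z)) := by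
    have hopen1 : IsOpen {z : ℂ | 1 < z.re} := isOpen_lt continuous_const continuous_re
    have hmem : {z : ℂ | 1 < z.re} ∈ 𝓝 (2 : ℂ) := hopen1.mem_nhds (by norm_num)
    filter_upwards [hmem] with z hz
    exact (exp_H_eq χ (by norm_num) hK (by norm_num) hz).symm
  have heq : Set.EqOn (DirichletCharacter.LFunction χ)
      (fun z => Complex.exp (F χ z + Rfun χ z)) U :=
    hA1.eqOn_of_preconnected_of_eventuallyEq hA2 hUpre h2U hev
  have : DirichletCharacter.LFunction χ s = Complex.exp (F χ s + Rfun χ s) := heq hs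
  rw [this]
  exact Complex.exp_ne_zero _

end

end PrimeCharSumAux

/-- If the character sums over primes of a non-principal Dirichlet
character `χ` mod `q` grow like `O(N^(1/2+ε))` for every `ε > 0`, then the Dirichlet
L-function of `χ` has no zeros with real part greater than `1/2`. -/
theorem lfunction_ne_zero_of_prime_char_sum_sqrt_bound
    (q : ℕ) [NeZero q] (χ : DirichletCharacter ℂ q) (hχ : χ ≠ 1)
    (hbound : ∀ ε : ℝ, 0 < ε → ∃ K : ℝ, 0 < K ∧ ∀ N : ℕ, 1 ≤ N →
      ‖∑ n ∈ Finset.range N, χ (Nat.nth Nat.Prime n)‖ ≤ K * (N : ℝ) ^ ((1 : ℝ) / 2 + ε)) :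
    ∀ s : ℂ, 1 / 2 < s.re → DirichletCharacter.LFunction χ s ≠ 0 :=
  PrimeCharSumAux.main_aux χ hχ hbound
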